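/- The tensor S^{ij}_k = E[X^i X^j conj(X^k)] of an obtuse random variable X in ℂ^N is doubly symmetric: (a) S^{ij}_k is symmetric in (i,j); (b) Σ_m S^{im}_j S^{kl}_m is symmetric in (i,k); (c) Σ_m S^{im}_j conj(S^{lm}_k) is symmetric in (i,k). -/

import Mathlib

/-- the 3-tensor `S^{ij}_k = E[X^i X^j conj(X^k)]` of an obtuse
random variable is doubly symmetric: (a) symmetric in `(i,j)`;
(b) `∑_m S^{im}_j S^{kl}_m` is symmetric in `(i,k)`;
(c) `∑_m S^{im}_j conj(S^{lm}_k)` is symmetric in `(i,k)`. -/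
theorem stmt17 {N : ℕ} (v : Fin (N + 1) → EuclideanSpace ℂ (Fin N))
    (hv : ∀ i j, i ≠ j → (inner ℂ (v i) (v j) : ℂ) = -1)
    (X : Fin (N + 1) → Fin (N + 1) → ℂ)
    (hX0 : ∀ ω, X 0 ω = 1)
    (hXs : ∀ (j : Fin N) (ω), X j.succ ω = v ω j)
    (S : Fin (N + 1) → Fin (N + 1) → Fin (N + 1) → ℂ)
    (hS : ∀ i j k, S i j k =
      ∑ ω, ((1 / (1 + ‖v ω‖ ^ 2) : ℝ) : ℂ) *
        (X i ω * X j ω * (starRingEnd ℂ) (X k ω))) :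
    (∀ i j k, S i j k = S j i k) ∧
    (∀ i j k l, ∑ m, S i m j * S k l m = ∑ m, S k m j * S i l m) ∧
    (∀ i j k l, ∑ m, S i m j * (starRingEnd ℂ) (S l m k) =
        ∑ m, S k m j * (starRingEnd ℂ) (S l m i)) := by
  set p : Fin (N + 1) → ℂ := fun ω => ((1 / (1 + ‖v ω‖ ^ 2) : ℝ) : ℂ) with hpdef
  have hnz : ∀ ω : Fin (N + 1), (1 + ‖v ω‖ ^ 2 : ℝ) ≠ 0 := fun ω => by positivity
  have hp : ∀ ω : Fin (N + 1), p ω * (((1 + ‖v ω‖ ^ 2 : ℝ)) : ℂ) = 1 := by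
    intro ω
    rw [hpdef]
    rw [← Complex.ofReal_mul, one_div, inv_mul_cancel₀ (hnz ω), Complex.ofReal_one]
  have key : ∀ ω τ : Fin (N + 1),
      (∑ m, X m ω * (starRingEnd ℂ) (X m τ)) =
        if ω = τ then (((1 + ‖v ω‖ ^ 2 : ℝ)) : ℂ) else 0 := by
    intro ω τ
    rw [Fin.sum_univ_succ]
    simp only [hX0, hXs, map_one, one_mul]
    have hin : (inner ℂ (v τ) (v ω) : ℂ) = ∑ j, v ω j * (starRingEnd ℂ) (v τ j) := by
      rw [PiLp.inner_apply]
      exact Finset.sum_congr rfl fun j _ => by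
        simp [RCLike.inner_apply, mul_comm]
    rw [← hin]
    by_cases h : ω = τ
    · subst h
      rw [if_pos rfl, inner_self_eq_norm_sq_to_K]
      push_cast
      rfl
    · rw [if_neg h, hv τ ω (Ne.symm h)]
      ring
  have hb : ∀ i k l j, (∑ m, S i m j * S k l m)
      = ∑ ω, p ω * (X i ω * X k ω * X l ω * (starRingEnd ℂ) (X j ω)) := by
    intro i k l j
    simp only [hS, Finset.sum_mul_sum, ← hpdef]
    rw [Finset.sum_comm]
    refine Finset.sum_congr rfl fun ω _ => ?_
    rw [Finset.sum_comm]
    have step : ∀ τ, (∑ m, (p ω * (X i ω * X m ω * (starRingEnd ℂ) (X j ω))) *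
          (p τ * (X k τ * X l τ * (starRingEnd ℂ) (X m τ))))
        = (p ω * X i ω * (starRingEnd ℂ) (X j ω) * (p τ * (X k τ * X l τ))) *
            ∑ m, X m ω * (starRingEnd ℂ) (X m τ) := by
      intro τ
      rw [Finset.mul_sum]
      exact Finset.sum_congr rfl fun m _ => by ring
    change ∑ τ, ∑ m, (p ω * (X i ω * X m ω * (starRingEnd ℂ) (X j ω))) *
          (p τ * (X k τ * X l τ * (starRingEnd ℂ) (X m τ))) = _
    simp only [step, key, mul_ite, mul_zero, Finset.sum_ite_eq, Finset.mem_univ, if_true]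
    linear_combination (p ω * X i ω * (starRingEnd ℂ) (X j ω) * X k ω * X l ω) * hp ω
  have hc : ∀ i k j l, (∑ m, S i m j * (starRingEnd ℂ) (S l m k))
      = ∑ ω, p ω * (X i ω * X k ω * (starRingEnd ℂ) (X j ω) * (starRingEnd ℂ) (X l ω)) := by
    intro i k j l
    have hconj : ∀ m, (starRingEnd ℂ) (S l m k)
        = ∑ τ, p τ * ((starRingEnd ℂ) (X l τ) * (starRingEnd ℂ) (X m τ) * X k τ) := by
      intro m
      rw [hS, map_sum]
      refine Finset.sum_congr rfl fun τ _ => ?_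
      simp only [map_mul, Complex.conj_ofReal, RingHomCompTriple.comp_apply,
        RingHom.id_apply, hpdef]
    simp only [hconj]
    simp only [hS, Finset.sum_mul_sum, ← hpdef]
    rw [Finset.sum_comm]
    refine Finset.sum_congr rfl fun ω _ => ?_
    rw [Finset.sum_comm]
    have step : ∀ τ, (∑ m, (p ω * (X i ω * X m ω * (starRingEnd ℂ) (X j ω))) *
          (p τ * ((starRingEnd ℂ) (X l τ) * (starRingEnd ℂ) (X m τ) * X k τ)))
        = (p ω * X i ω * (starRingEnd ℂ) (X j ω) *
            (p τ * ((starRingEnd ℂ) (X l τ) * X k τ))) *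
            ∑ m, X m ω * (starRingEnd ℂ) (X m τ) := by
      intro τ
      rw [Finset.mul_sum]
      exact Finset.sum_congr rfl fun m _ => by ring
    change ∑ τ, ∑ m, (p ω * (X i ω * X m ω * (starRingEnd ℂ) (X j ω))) *
          (p τ * ((starRingEnd ℂ) (X l τ) * (starRingEnd ℂ) (X m τ) * X k τ)) = _
    simp only [step, key, mul_ite, mul_zero, Finset.sum_ite_eq, Finset.mem_univ, if_true]
    linear_combination (p ω * X i ω * (starRingEnd ℂ) (X j ω) *
      (starRingEnd ℂ) (X l ω) * X k ω) * hp ω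
  refine ⟨fun i j k => ?_, fun i j k l => ?_, fun i j k l => ?_⟩
  · rw [hS, hS]
    exact Finset.sum_congr rfl fun ω _ => by ring
  · rw [hb i k l j, hb k i l j]
    exact Finset.sum_congr rfl fun ω _ => by ring
  · rw [hc i k j l, hc k i j l]
    exact Finset.sum_congr rfl fun ω _ => by ring
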